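/- Let n, k ≥ 1 be integers and let B ⊆ ℝ^n be a bounded set such that for every r ∈ [0,1]^n there exists a ∈ ℝ^n with {a + i·r : 1 ≤ i ≤ k} ⊆ B. Then dim_M B ≥ limsup_{N → ∞} ( log F'_{n,k}(N) / log N ). -/

import Mathlib

open Set Filter Bornology

/-- Covering number of `E` by open balls of radius `ε`. -/
noncomputable def covNum {X : Type*} [PseudoMetricSpace X] (E : Set X) (ε : ℝ) : ℕ∞ :=
  ⨅ (t : Finset X) (_ : E ⊆ ⋃ x ∈ t, Metric.ball x ε), (t.card : ℕ∞)

/-- Upper Minkowski (box-counting) dimension. -/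
noncomputable def dimM {X : Type*} [PseudoMetricSpace X] (E : Set X) : ℝ :=
  limsup (fun ε : ℝ => Real.log ((covNum E ε).toNat) / Real.log (1 / ε))
    (nhdsWithin 0 (Ioi 0))

/-- Packing dimension, as modified upper box dimension: the infimum of
`⨆ j, dimM (E j)` over countable covers of the set by bounded sets. -/
noncomputable def dimP {X : Type*} [PseudoMetricSpace X] (E : Set X) : ℝ :=
  sInf { a : ℝ | ∃ f : ℕ → Set X, (E ⊆ ⋃ j, f j) ∧ (∀ j, IsBounded (f j)) ∧
    a = ⨆ j, dimM (f j) }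

/-- `F'nk n k N` : the minimum cardinality of a finite set `A ⊆ ℤ^n` containing a `k`-term
arithmetic progression `{a + i·d : 1 ≤ i ≤ k}` for `N^n` distinct common differences `d ∈ ℤ^n`. -/
noncomputable def F'nk (n k N : ℕ) : ℕ :=
  sInf { m | ∃ A : Finset (Fin n → ℤ), A.card = m ∧ ∃ D : Finset (Fin n → ℤ),
    D.card = N ^ n ∧ ∀ d ∈ D, ∃ a : Fin n → ℤ, ∀ i ∈ Finset.Icc 1 k, a + (i : ℤ) • d ∈ A }

/-! ### Auxiliary lemmas -/

section Aux

variable {n : ℕ}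

lemma coord_dist_le (x y : EuclideanSpace ℝ (Fin n)) (i : Fin n) :
    dist (x i) (y i) ≤ dist x y := by
  rw [EuclideanSpace.dist_eq]
  rw [show dist (x i) (y i) = Real.sqrt (dist (x i) (y i) ^ 2) from
    (Real.sqrt_sq dist_nonneg).symm]
  exact Real.sqrt_le_sqrt (Finset.single_le_sum (f := fun j => dist (x j) (y j) ^ 2)
    (fun j _ => sq_nonneg _) (Finset.mem_univ i))

lemma dist_le_sqrt_mul (x y : EuclideanSpace ℝ (Fin n)) {s : ℝ} (hs : 0 ≤ s)
    (h : ∀ i, dist (x i) (y i) ≤ s) : dist x y ≤ Real.sqrt n * s := by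
  rw [EuclideanSpace.dist_eq]
  have h1 : ∑ i, dist (x i) (y i) ^ 2 ≤ (n : ℝ) * s ^ 2 := by
    calc ∑ i, dist (x i) (y i) ^ 2 ≤ ∑ _i : Fin n, s ^ 2 :=
          Finset.sum_le_sum fun i _ => pow_le_pow_left₀ dist_nonneg (h i) 2
      _ = (n : ℝ) * s ^ 2 := by simp [Finset.card_univ]
  calc Real.sqrt (∑ i, dist (x i) (y i) ^ 2) ≤ Real.sqrt ((n : ℝ) * s ^ 2) :=
        Real.sqrt_le_sqrt h1
    _ = Real.sqrt n * s := by
        rw [Real.sqrt_mul (by positivity), Real.sqrt_sq hs]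

lemma covNum_le_card {X : Type*} [PseudoMetricSpace X] {E : Set X} {ε : ℝ}
    {t : Finset X} (ht : E ⊆ ⋃ x ∈ t, Metric.ball x ε) :
    covNum E ε ≤ (t.card : ℕ∞) :=
  iInf_le_of_le t (iInf_le _ ht)

lemma exists_cover_card_le {X : Type*} [PseudoMetricSpace X] {E : Set X} {ε : ℝ}
    (h : covNum E ε ≠ ⊤) :
    ∃ t : Finset X, (E ⊆ ⋃ x ∈ t, Metric.ball x ε) ∧ t.card ≤ (covNum E ε).toNat := by
  set M := (covNum E ε).toNat with hMdef
  have hM : covNum E ε = (M : ℕ∞) := (ENat.coe_toNat h).symm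
  have hlt : covNum E ε < ((M + 1 : ℕ) : ℕ∞) := by
    rw [hM]; exact_mod_cast Nat.lt_succ_self M
  rw [covNum, iInf_lt_iff] at hlt
  obtain ⟨t, ht⟩ := hlt
  rw [iInf_lt_iff] at ht
  obtain ⟨hcov, hlt2⟩ := ht
  refine ⟨t, hcov, ?_⟩
  have : t.card < M + 1 := by exact_mod_cast hlt2
  omega

/-- The grid covering lemma: a bounded set in `ℝ^n` admits small covers. -/
lemma grid_cover (hn : 1 ≤ n) {B : Set (EuclideanSpace ℝ (Fin n))} {R : ℝ} (hR0 : 0 ≤ R)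
    (hR : B ⊆ Metric.closedBall 0 R) {ε : ℝ} (hε : 0 < ε) (hε1 : ε ≤ 1) :
    ∃ t : Finset (EuclideanSpace ℝ (Fin n)),
      (B ⊆ ⋃ x ∈ t, Metric.ball x ε) ∧
      ((t.card : ℝ) ≤ ((4 * R * Real.sqrt n + 3) / ε) ^ n) := by
  have hsn : (1 : ℝ) ≤ Real.sqrt n := by
    rw [show (1 : ℝ) = Real.sqrt 1 by simp]
    exact Real.sqrt_le_sqrt (by exact_mod_cast hn)
  have hsn0 : (0 : ℝ) < Real.sqrt n := lt_of_lt_of_le one_pos hsn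
  set s : ℝ := ε / (2 * Real.sqrt n) with hs_def
  have hs : 0 < s := by positivity
  set Z : Finset (Fin n → ℤ) := Fintype.piFinset (fun _ => Finset.Icc ⌊-R / s⌋ ⌈R / s⌉)
    with hZ_def
  set c : (Fin n → ℤ) → EuclideanSpace ℝ (Fin n) :=
    fun z => (WithLp.equiv 2 (Fin n → ℝ)).symm (fun j => s * z j) with hc_def
  classical
  refine ⟨Z.image c, ?_, ?_⟩
  · intro x hx
    have hxR : ∀ j, |x j| ≤ R := by
      intro j
      have h1 := coord_dist_le x 0 j
      have hx0 : dist x 0 ≤ R := by simpa [Metric.mem_closedBall] using hR hx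
      have : dist (x j) ((0 : EuclideanSpace ℝ (Fin n)) j) = |x j| := by
        simp [Real.dist_eq]
      rw [this] at h1
      exact h1.trans hx0
    set z : Fin n → ℤ := fun j => ⌊x j / s⌋ with hz_def
    have hzZ : z ∈ Z := by
      rw [hZ_def, Fintype.mem_piFinset]
      intro j
      rw [Finset.mem_Icc]
      constructor
      · apply Int.floor_le_floor
        have : -R ≤ x j := by linarith [(abs_le.mp (hxR j)).1]
        gcongr
      · have h1 : (⌊x j / s⌋ : ℝ) ≤ R / s := by
          refine (Int.floor_le _).trans ?_
          have := (abs_le.mp (hxR j)).2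
          gcongr
        exact_mod_cast h1.trans (Int.le_ceil _)
    refine mem_iUnion₂.mpr ⟨c z, Finset.mem_image_of_mem c hzZ, ?_⟩
    rw [Metric.mem_ball]
    have hcoord : ∀ j, dist (x j) (c z j) ≤ s := by
      intro j
      have hcj : c z j = s * (⌊x j / s⌋ : ℝ) := by
        simp [hc_def, hz_def, WithLp.equiv_symm_apply, PiLp.toLp_apply]
      have h1 : (⌊x j / s⌋ : ℝ) ≤ x j / s := Int.floor_le _
      have h2 : x j / s < ⌊x j / s⌋ + 1 := Int.lt_floor_add_one _
      have hxs : s * (x j / s) = x j := mul_div_cancel₀ _ (ne_of_gt hs)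
      have key1 : 0 ≤ x j - s * (⌊x j / s⌋ : ℝ) := by nlinarith
      have key2 : x j - s * (⌊x j / s⌋ : ℝ) ≤ s := by nlinarith
      rw [hcj, Real.dist_eq, abs_of_nonneg key1]
      exact key2
    calc dist x (c z) ≤ Real.sqrt n * s := dist_le_sqrt_mul _ _ hs.le hcoord
      _ = ε / 2 := by rw [hs_def]; field_simp
      _ < ε := by linarith
  · have hfac : (((Finset.Icc ⌊-R / s⌋ ⌈R / s⌉).card : ℕ) : ℝ)
        ≤ (4 * R * Real.sqrt n + 3) / ε := by
      rw [Int.card_Icc]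
      have ha0 : ⌊-R / s⌋ ≤ 0 :=
        Int.floor_nonpos (div_nonpos_of_nonpos_of_nonneg (by linarith) hs.le)
      have hb0 : (0 : ℤ) ≤ ⌈R / s⌉ := Int.ceil_nonneg (by positivity)
      have hcast : (((⌈R / s⌉ + 1 - ⌊-R / s⌋).toNat : ℕ) : ℝ)
          = ((⌈R / s⌉ + 1 - ⌊-R / s⌋ : ℤ) : ℝ) := by
        exact_mod_cast Int.toNat_of_nonneg (by omega)
      rw [hcast]
      push_cast
      have hb : (⌈R / s⌉ : ℝ) < R / s + 1 := Int.ceil_lt_add_one _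
      have ha : -(R / s) - 1 < (⌊-R / s⌋ : ℝ) := by
        have := Int.sub_one_lt_floor (-R / s)
        have h2 : -R / s = -(R / s) := by ring
        linarith [h2 ▸ this]
      have hRs : R / s = 2 * R * Real.sqrt n / ε := by
        rw [hs_def]; field_simp
      have h3 : (3 : ℝ) ≤ 3 / ε := by
        rw [le_div_iff₀ hε]; nlinarith
      have hid : (4 * R * Real.sqrt n + 3) / ε = 2 * (2 * R * Real.sqrt n / ε) + 3 / ε := by
        ring
      rw [hid]
      linarith
    calc ((Z.image c).card : ℝ) ≤ (Z.card : ℝ) := by exact_mod_cast Finset.card_image_le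
      _ = (((Finset.Icc ⌊-R / s⌋ ⌈R / s⌉).card : ℕ) : ℝ) ^ n := by
          rw [hZ_def, Fintype.card_piFinset]
          push_cast
          simp [Finset.prod_const]
      _ ≤ ((4 * R * Real.sqrt n + 3) / ε) ^ n := by
          exact pow_le_pow_left₀ (by positivity) hfac n

lemma F'nk_set_nonempty (n k N : ℕ) :
    { m | ∃ A : Finset (Fin n → ℤ), A.card = m ∧ ∃ D : Finset (Fin n → ℤ),
      D.card = N ^ n ∧ ∀ d ∈ D, ∃ a : Fin n → ℤ, ∀ i ∈ Finset.Icc 1 k,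
        a + (i : ℤ) • d ∈ A }.Nonempty := by
  classical
  set D : Finset (Fin n → ℤ) := Fintype.piFinset (fun _ => Finset.Ico (0 : ℤ) N) with hD
  have hDcard : D.card = N ^ n := by
    rw [hD, Fintype.card_piFinset]
    simp [Int.card_Ico]
  set A : Finset (Fin n → ℤ) :=
    D.biUnion (fun d => (Finset.Icc 1 k).image (fun i => (i : ℤ) • d)) with hA
  refine ⟨A.card, A, rfl, D, hDcard, ?_⟩
  intro d hd
  refine ⟨0, fun i hi => ?_⟩
  rw [hA, Finset.mem_biUnion]
  exact ⟨d, hd, by simpa using Finset.mem_image_of_mem (fun i : ℕ => (i : ℤ) • d) hi⟩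

lemma F'nk_pos (n k N : ℕ) (hn : 1 ≤ n) (hk : 1 ≤ k) (hN : 1 ≤ N) : 1 ≤ F'nk n k N := by
  rw [Nat.one_le_iff_ne_zero]
  intro h0
  have hmem := Nat.sInf_mem (F'nk_set_nonempty n k N)
  rw [show sInf _ = F'nk n k N from rfl, h0] at hmem
  obtain ⟨A, hA, D, hDcard, hAP⟩ := hmem
  have hDne : D.Nonempty := Finset.card_pos.mp (by rw [hDcard]; positivity)
  obtain ⟨d, hd⟩ := hDne
  obtain ⟨a, ha⟩ := hAP d hd
  have := ha 1 (Finset.mem_Icc.mpr ⟨le_refl 1, hk⟩)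
  rw [Finset.card_eq_zero.mp hA] at this
  exact absurd this (Finset.notMem_empty _)

/-- The key counting estimate: from a cover of `B` by balls of radius `1/N` we obtain
an admissible set for `F'nk` of size at most `t.card * 5 ^ n`. -/
lemma main_count {n k : ℕ} (hk : 1 ≤ k)
    {B : Set (EuclideanSpace ℝ (Fin n))}
    (hyp : ∀ r : EuclideanSpace ℝ (Fin n), (∀ i, r i ∈ Icc (0 : ℝ) 1) →
      ∃ a : EuclideanSpace ℝ (Fin n), ∀ i ∈ Finset.Icc 1 k, a + (i : ℝ) • r ∈ B)
    {N : ℕ} (hN : 1 ≤ N)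
    {t : Finset (EuclideanSpace ℝ (Fin n))}
    (ht : B ⊆ ⋃ x ∈ t, Metric.ball x (1 / (N : ℝ))) :
    F'nk n k N ≤ t.card * 5 ^ n := by
  classical
  have hN0 : (0 : ℝ) < N := by exact_mod_cast hN
  set D : Finset (Fin n → ℤ) := Fintype.piFinset (fun _ => Finset.Ico (0 : ℤ) N) with hD
  have hDcard : D.card = N ^ n := by
    rw [hD, Fintype.card_piFinset]
    simp [Int.card_Ico]
  set box : EuclideanSpace ℝ (Fin n) → Finset (Fin n → ℤ) :=
    fun x => Fintype.piFinset
      (fun j => Finset.Icc ⌈(N : ℝ) * x j - 2⌉ ⌊(N : ℝ) * x j + 2⌋) with hbox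
  set A : Finset (Fin n → ℤ) := t.biUnion box with hA
  have hAcard : A.card ≤ t.card * 5 ^ n := by
    refine (Finset.card_biUnion_le).trans ?_
    have hb : ∀ x ∈ t, (box x).card ≤ 5 ^ n := by
      intro x _
      rw [hbox, Fintype.card_piFinset]
      calc ∏ j : Fin n, (Finset.Icc ⌈(N : ℝ) * x j - 2⌉ ⌊(N : ℝ) * x j + 2⌋).card
          ≤ ∏ _j : Fin n, 5 := by
            refine Finset.prod_le_prod' fun j _ => ?_
            rw [Int.card_Icc]
            rw [Int.toNat_le]
            have h1 : (⌊(N : ℝ) * x j + 2⌋ : ℝ) ≤ (N : ℝ) * x j + 2 := Int.floor_le _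
            have h2 : (N : ℝ) * x j - 2 ≤ (⌈(N : ℝ) * x j - 2⌉ : ℝ) := Int.le_ceil _
            exact_mod_cast (by push_cast; linarith :
              ((⌊(N : ℝ) * x j + 2⌋ + 1 - ⌈(N : ℝ) * x j - 2⌉ : ℤ) : ℝ) ≤ ((5 : ℤ) : ℝ))
        _ = 5 ^ n := by simp [Finset.prod_const]
    calc ∑ x ∈ t, (box x).card ≤ ∑ _x ∈ t, 5 ^ n := Finset.sum_le_sum hb
      _ = t.card * 5 ^ n := by simp [Finset.sum_const, mul_comm]
  have hAP : ∀ d ∈ D, ∃ a : Fin n → ℤ, ∀ i ∈ Finset.Icc 1 k, a + (i : ℤ) • d ∈ A := by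
    intro d hd
    have hdj : ∀ j, 0 ≤ d j ∧ d j < N := by
      intro j
      have := (Fintype.mem_piFinset.mp hd) j
      exact Finset.mem_Ico.mp this
    set r : EuclideanSpace ℝ (Fin n) :=
      (WithLp.equiv 2 (Fin n → ℝ)).symm (fun j => (d j : ℝ) / N) with hr_def
    have hr : ∀ j, r j ∈ Icc (0 : ℝ) 1 := by
      intro j
      have h1 : (0 : ℝ) ≤ (d j : ℝ) := by exact_mod_cast (hdj j).1
      have h2 : (d j : ℝ) ≤ (N : ℝ) := by exact_mod_cast (hdj j).2.le
      constructor
      · have : r j = (d j : ℝ) / N := by simp [hr_def, WithLp.equiv_symm_apply, PiLp.toLp_apply]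
        rw [this]; positivity
      · have : r j = (d j : ℝ) / N := by simp [hr_def, WithLp.equiv_symm_apply, PiLp.toLp_apply]
        rw [this, div_le_one hN0]; exact h2
    obtain ⟨a, ha⟩ := hyp r hr
    refine ⟨fun j => ⌊(N : ℝ) * a j⌋, fun i hi => ?_⟩
    have hpB : a + (i : ℝ) • r ∈ B := ha i hi
    obtain ⟨x, hxt, hball⟩ := mem_iUnion₂.mp (ht hpB)
    rw [hA, Finset.mem_biUnion]
    refine ⟨x, hxt, ?_⟩
    rw [hbox, Fintype.mem_piFinset]
    intro j
    rw [Finset.mem_Icc, Pi.add_apply, Pi.smul_apply, smul_eq_mul]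
    have hpj : (a + (i : ℝ) • r) j = a j + (i : ℝ) * ((d j : ℝ) / N) := by
      simp [hr_def, PiLp.add_apply, PiLp.smul_apply, smul_eq_mul,
        WithLp.equiv_symm_apply, PiLp.toLp_apply]
    have hdist : |(a + (i : ℝ) • r) j - x j| < 1 / N := by
      rw [← Real.dist_eq]
      exact lt_of_le_of_lt (coord_dist_le _ _ j) (Metric.mem_ball.mp hball)
    rw [hpj] at hdist
    have habs := abs_lt.mp hdist
    have hfl1 : ((⌊(N : ℝ) * a j⌋ : ℤ) : ℝ) ≤ (N : ℝ) * a j := Int.floor_le _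
    have hfl2 : (N : ℝ) * a j - 1 < ((⌊(N : ℝ) * a j⌋ : ℤ) : ℝ) := Int.sub_one_lt_floor _
    have e1 : (N : ℝ) * (a j + (i : ℝ) * ((d j : ℝ) / N) - x j)
        = (N : ℝ) * a j + (i : ℝ) * (d j : ℝ) - (N : ℝ) * x j := by
      field_simp
    have hm1 : -1 < (N : ℝ) * a j + (i : ℝ) * (d j : ℝ) - (N : ℝ) * x j := by
      have h := mul_lt_mul_of_pos_left habs.1 hN0
      have e0 : (N : ℝ) * (-(1 / N)) = -1 := by field_simp
      rw [e0, e1] at h; exact h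
    have hm2 : (N : ℝ) * a j + (i : ℝ) * (d j : ℝ) - (N : ℝ) * x j < 1 := by
      have h := mul_lt_mul_of_pos_left habs.2 hN0
      have e0 : (N : ℝ) * (1 / N) = 1 := by field_simp
      rw [e1, e0] at h; exact h
    constructor
    · rw [Int.ceil_le]
      push_cast
      linarith [hfl2]
    · rw [Int.le_floor]
      push_cast
      linarith [hfl1]
  refine le_trans (Nat.sInf_le ⟨A, rfl, D, hDcard, hAP⟩) hAcard

end Aux

/-- If a bounded `B ⊆ ℝ^n` contains a `k`-term arithmetic progression with every common
difference `r ∈ [0,1]^n`, then `dim_M B ≥ limsup_N (log F'_{n,k}(N) / log N)`. -/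
theorem stmt8 (n k : ℕ) (hn : 1 ≤ n) (hk : 1 ≤ k)
    (B : Set (EuclideanSpace ℝ (Fin n))) (hB : IsBounded B)
    (hyp : ∀ r : EuclideanSpace ℝ (Fin n), (∀ i, r i ∈ Icc (0 : ℝ) 1) →
      ∃ a : EuclideanSpace ℝ (Fin n), ∀ i ∈ Finset.Icc 1 k, a + (i : ℝ) • r ∈ B) :
    limsup (fun N : ℕ => Real.log (F'nk n k N) / Real.log N) atTop ≤ dimM B := by
  classical
  -- B is nonempty
  obtain ⟨a0, ha0⟩ := hyp 0 (fun i => by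
    rw [show (0 : EuclideanSpace ℝ (Fin n)) i = 0 from rfl, Set.mem_Icc]
    norm_num)
  have hBne : B.Nonempty := ⟨_, ha0 1 (Finset.mem_Icc.mpr ⟨le_refl 1, hk⟩)⟩
  -- bounding ball
  obtain ⟨R0, hR0⟩ := hB.subset_closedBall 0
  set R : ℝ := max R0 0 with hR_def
  have hRnn : 0 ≤ R := le_max_right _ _
  have hRB : B ⊆ Metric.closedBall 0 R :=
    hR0.trans (Metric.closedBall_subset_closedBall (le_max_left _ _))
  set C : ℝ := 4 * R * Real.sqrt n + 3 with hC_def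
  have hC3 : 3 ≤ C := by nlinarith [Real.sqrt_nonneg (n : ℝ)]
  have hC1 : 1 < C := by linarith
  have hC0 : 0 < C := by linarith
  -- covering number bounds
  have hcov : ∀ ε : ℝ, 0 < ε → ε ≤ 1 → covNum B ε ≠ ⊤ ∧
      (((covNum B ε).toNat : ℝ)) ≤ (C / ε) ^ n := by
    intro ε hε hε1
    obtain ⟨t, htc, htcard⟩ := grid_cover hn hRnn hRB hε hε1
    have hle : covNum B ε ≤ (t.card : ℕ∞) := covNum_le_card htc
    have hne : covNum B ε ≠ ⊤ := by
      intro h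
      rw [h, top_le_iff] at hle
      exact (ENat.coe_ne_top t.card) hle
    refine ⟨hne, ?_⟩
    have hcoe : ((covNum B ε).toNat : ℕ∞) = covNum B ε := ENat.coe_toNat hne
    have h2 : (covNum B ε).toNat ≤ t.card := by
      rw [← hcoe] at hle
      exact_mod_cast hle
    calc ((covNum B ε).toNat : ℝ) ≤ (t.card : ℝ) := by exact_mod_cast h2
      _ ≤ (C / ε) ^ n := htcard
  have hcovpos : ∀ ε : ℝ, 0 < ε → ε ≤ 1 → 1 ≤ (covNum B ε).toNat := by
    intro ε hε hε1
    by_contra h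
    push_neg at h
    have h0 : (covNum B ε).toNat = 0 := by omega
    obtain ⟨t, htc, htcard⟩ := exists_cover_card_le (hcov ε hε hε1).1
    rw [h0, Nat.le_zero] at htcard
    obtain ⟨b, hb⟩ := hBne
    have hmem := htc hb
    rw [Finset.card_eq_zero.mp htcard] at hmem
    simp at hmem
  -- the box-dimension quotient function
  set g : ℝ → ℝ := fun ε => Real.log ((covNum B ε).toNat) / Real.log (1 / ε) with hg_def
  have hlog2 : (0 : ℝ) < Real.log 2 := Real.log_pos one_lt_two
  have hlogC : 0 < Real.log C := Real.log_pos hC1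
  set K : ℝ := n * Real.log C / Real.log 2 + n with hK_def
  have hgK : ∀ᶠ ε in nhdsWithin (0 : ℝ) (Ioi 0), g ε ≤ K := by
    filter_upwards [Ioc_mem_nhdsGT_of_mem
      (by constructor <;> norm_num : (0 : ℝ) ∈ Ico (0 : ℝ) (1 / 2))] with ε hε
    obtain ⟨hε0, hε2⟩ := hε
    have hε1 : ε ≤ 1 := hε2.trans (by norm_num)
    have hb := (hcov ε hε0 hε1).2
    have hpos := hcovpos ε hε0 hε1
    have hL2 : Real.log 2 ≤ Real.log (1 / ε) := by
      apply Real.log_le_log (by norm_num)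
      rw [le_one_div (by norm_num) hε0]
      exact hε2
    have hL0 : 0 < Real.log (1 / ε) := lt_of_lt_of_le hlog2 hL2
    have hlogcov : Real.log ((covNum B ε).toNat)
        ≤ (n : ℝ) * (Real.log C + Real.log (1 / ε)) := by
      have h1 : Real.log ((covNum B ε).toNat) ≤ Real.log ((C / ε) ^ n) := by
        apply Real.log_le_log (by exact_mod_cast hpos) hb
      rw [Real.log_pow] at h1
      have h2 : Real.log (C / ε) = Real.log C + Real.log (1 / ε) := by
        rw [div_eq_mul_one_div, Real.log_mul (ne_of_gt hC0) (by positivity)]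
      rw [h2] at h1
      exact h1
    calc g ε ≤ ((n : ℝ) * (Real.log C + Real.log (1 / ε))) / Real.log (1 / ε) :=
          (div_le_div_iff_of_pos_right hL0).mpr hlogcov
      _ = (n : ℝ) * Real.log C / Real.log (1 / ε) + n := by field_simp
      _ ≤ (n : ℝ) * Real.log C / Real.log 2 + n := by
          have := div_le_div_of_nonneg_left
            (by positivity : (0 : ℝ) ≤ (n : ℝ) * Real.log C) hlog2 hL2
          linarith
      _ = K := rfl
  have hBdd : IsBoundedUnder (· ≤ ·) (nhdsWithin (0 : ℝ) (Ioi 0)) g :=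
    ⟨K, by rwa [eventually_map]⟩
  -- coboundedness of the LHS sequence
  have hh0 : ∀ N : ℕ, 0 ≤ Real.log (F'nk n k N) / Real.log N :=
    fun N => div_nonneg (Real.log_natCast_nonneg _) (Real.log_natCast_nonneg _)
  have hcob : IsCoboundedUnder (· ≤ ·) atTop
      (fun N : ℕ => Real.log (F'nk n k N) / Real.log N) :=
    isCoboundedUnder_le_of_le atTop hh0
  -- main limsup argument
  refine le_of_forall_gt_imp_ge_of_dense ?_
  intro b hb
  obtain ⟨b', hb1, hb2⟩ := exists_between hb
  have hev1 : ∀ᶠ ε in nhdsWithin (0 : ℝ) (Ioi 0), g ε < b' :=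
    eventually_lt_of_limsup_lt (show limsup g _ < b' from hb1) hBdd
  have htend : Tendsto (fun N : ℕ => 1 / (N : ℝ)) atTop (nhdsWithin 0 (Ioi 0)) := by
    apply tendsto_nhdsWithin_of_tendsto_nhds_of_eventually_within
    · exact tendsto_one_div_atTop_nhds_zero_nat
    · filter_upwards [eventually_ge_atTop 1] with N hN
      have : (0 : ℝ) < N := by exact_mod_cast hN
      rw [mem_Ioi]
      positivity
  have hev2 : ∀ᶠ N : ℕ in atTop, g (1 / (N : ℝ)) < b' := htend.eventually hev1
  have htend0 : Tendsto (fun N : ℕ => (n : ℝ) * Real.log 5 / Real.log N) atTop (nhds 0) :=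
    Tendsto.div_atTop tendsto_const_nhds
      (Real.tendsto_log_atTop.comp tendsto_natCast_atTop_atTop)
  have hev3 : ∀ᶠ N : ℕ in atTop, (n : ℝ) * Real.log 5 / Real.log N < b - b' :=
    htend0.eventually_lt_const (by linarith)
  have hev4 : ∀ᶠ N : ℕ in atTop, Real.log (F'nk n k N) / Real.log N
      ≤ (n : ℝ) * Real.log 5 / Real.log N + g (1 / (N : ℝ)) := by
    filter_upwards [eventually_ge_atTop 2] with N hN2
    have hN1 : 1 ≤ N := by omega
    have hN0 : (0 : ℝ) < N := by exact_mod_cast hN1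
    have hε0 : (0 : ℝ) < 1 / (N : ℝ) := by positivity
    have hε1 : 1 / (N : ℝ) ≤ 1 := by
      rw [div_le_one hN0]
      exact_mod_cast hN1
    obtain ⟨hne, -⟩ := hcov _ hε0 hε1
    obtain ⟨t, htc, htcard⟩ := exists_cover_card_le hne
    set M := (covNum B (1 / (N : ℝ))).toNat with hM_def
    have hM1 : 1 ≤ M := hcovpos _ hε0 hε1
    have hF : F'nk n k N ≤ M * 5 ^ n :=
      (main_count hk hyp hN1 htc).trans (Nat.mul_le_mul_right _ htcard)
    have hF1 : 1 ≤ F'nk n k N := F'nk_pos n k N hn hk hN1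
    have hlogN : 0 < Real.log N := Real.log_pos (by exact_mod_cast hN2)
    have hlog : Real.log (F'nk n k N) ≤ (n : ℝ) * Real.log 5 + Real.log M := by
      have h1 : Real.log (F'nk n k N) ≤ Real.log ((M * 5 ^ n : ℕ) : ℝ) := by
        apply Real.log_le_log (by exact_mod_cast hF1)
        exact_mod_cast hF
      calc Real.log (F'nk n k N) ≤ Real.log ((M * 5 ^ n : ℕ) : ℝ) := h1
        _ = (n : ℝ) * Real.log 5 + Real.log M := by
            push_cast
            rw [Real.log_mul (by positivity) (by positivity), Real.log_pow]
            ring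
    have hgval : g (1 / (N : ℝ)) = Real.log M / Real.log N := by
      rw [hg_def]
      simp only
      rw [one_div_one_div]
    calc Real.log (F'nk n k N) / Real.log N
        ≤ ((n : ℝ) * Real.log 5 + Real.log M) / Real.log N :=
          (div_le_div_iff_of_pos_right hlogN).mpr hlog
      _ = (n : ℝ) * Real.log 5 / Real.log N + Real.log M / Real.log N := add_div _ _ _
      _ = (n : ℝ) * Real.log 5 / Real.log N + g (1 / (N : ℝ)) := by rw [hgval]
  refine limsup_le_of_le hcob ?_
  filter_upwards [hev2, hev3, hev4] with N h2 h3 h4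
  calc Real.log (F'nk n k N) / Real.log N
      ≤ (n : ℝ) * Real.log 5 / Real.log N + g (1 / (N : ℝ)) := h4
    _ ≤ b := by linarith
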